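/- Let D ≥ 1 be an integer and let ξ : ℝ^D → ℝ be continuous with ξ(0) = 0, and assume the monotone conjugate ξ* is differentiable on ℝ^D. Let χ : ℝ_+^D → ℝ be Lipschitz, let t > 0, and let x, y ∈ ℝ_+^D satisfy χ(y) − S_tχ(x) − (tξ)*(y−x) = 0 (i.e. y attains the supremum defining S_tχ(x)). Then: (i) if x ∈ (0,∞)^D and S_tχ is differentiable at x, then ∇S_tχ(x) = ∇(tξ)*(y−x); (ii) if y ∈ (0,∞)^D and χ is differentiable at y, then ∇χ(y) = ∇(tξ)*(y−x); (iii) if both conditions hold, then ∇S_tχ(x) = ∇χ(y). -/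

import Mathlib

open MeasureTheory
open scoped NNReal

/-- The nonnegative orthant `ℝ_+^D` in `ℝ^D`. -/
def orthant (D : ℕ) : Set (EuclideanSpace ℝ (Fin D)) := {x | ∀ i, 0 ≤ x i}

/-- The monotone conjugate `ξ*(y) = sup_{z ∈ ℝ_+^D} (z·y − ξ(z))`, valued in `ℝ ∪ {+∞}`
(formalized as `EReal`). -/
noncomputable def monotoneConj (D : ℕ) (ξ : EuclideanSpace ℝ (Fin D) → ℝ)
    (y : EuclideanSpace ℝ (Fin D)) : EReal :=
  ⨆ z : orthant D, (((inner ℝ z.1 y : ℝ) - ξ z.1 : ℝ) : EReal)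

/-- suppose `ξ` is continuous with `ξ(0) = 0` and its monotone conjugate is
real-valued, given by the differentiable function `xstar`, so that
`(tξ)*(w) = t·xstar(w/t)` for `t > 0`.  Let `χ` be Lipschitz on `ℝ_+^D`, and let `S` be the
real-valued function representing the Hopf–Lax value `S_tχ` on `ℝ_+^D`.  If
`x, y ∈ ℝ_+^D` satisfy `χ(y) − S_tχ(x) − (tξ)*(y−x) = 0`, then:
(i) if `x ∈ (0,∞)^D` and `S_tχ` is differentiable at `x`, then `∇S_tχ(x) = ∇(tξ)*(y−x)`;
(ii) if `y ∈ (0,∞)^D` and `χ` is differentiable at `y`, then `∇χ(y) = ∇(tξ)*(y−x)`;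
(iii) if both hold, then `∇S_tχ(x) = ∇χ(y)`. -/
theorem gradient_hopfLax_optimizer (D : ℕ) (hD : 1 ≤ D)
    (ξ : EuclideanSpace ℝ (Fin D) → ℝ) (hξcont : Continuous ξ) (hξ0 : ξ 0 = 0)
    (xstar : EuclideanSpace ℝ (Fin D) → ℝ)
    (hxstar : ∀ y, monotoneConj D ξ y = (xstar y : EReal))
    (hxdiff : Differentiable ℝ xstar)
    (χ : EuclideanSpace ℝ (Fin D) → ℝ) (K : ℝ≥0)
    (hχlip : LipschitzOnWith K χ (orthant D))
    (t : ℝ) (ht : 0 < t)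
    (S : EuclideanSpace ℝ (Fin D) → ℝ)
    (hS : ∀ x ∈ orthant D, (S x : EReal) =
      ⨆ y : orthant D, ((χ y.1 : EReal) - ((t * xstar (t⁻¹ • (y.1 - x)) : ℝ) : EReal)))
    (x y : EuclideanSpace ℝ (Fin D)) (hx : x ∈ orthant D) (hy : y ∈ orthant D)
    (hopt : χ y - S x - t * xstar (t⁻¹ • (y - x)) = 0) :
    ((∀ i, 0 < x i) → DifferentiableAt ℝ S x →
      gradient S x = gradient (fun w => t * xstar (t⁻¹ • w)) (y - x)) ∧
    ((∀ i, 0 < y i) → DifferentiableAt ℝ χ y →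
      gradient χ y = gradient (fun w => t * xstar (t⁻¹ • w)) (y - x)) ∧
    ((∀ i, 0 < x i) → DifferentiableAt ℝ S x → (∀ i, 0 < y i) → DifferentiableAt ℝ χ y →
      gradient S x = gradient χ y) := by
  set g : EuclideanSpace ℝ (Fin D) → ℝ := fun w => t * xstar (t⁻¹ • w) with hgdef
  have hgdiff : Differentiable ℝ g := by
    rw [hgdef]; fun_prop
  -- key inequality
  have key : ∀ y' ∈ orthant D, ∀ x' ∈ orthant D, χ y' - g (y' - x') ≤ S x' := by
    intro y' hy' x' hx'
    have h := hS x' hx'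
    have hle : ((χ y' - g (y' - x') : ℝ) : EReal) ≤ (S x' : EReal) := by
      rw [h]
      have := le_iSup (fun z : orthant D =>
        ((χ z.1 : EReal) - ((t * xstar (t⁻¹ • (z.1 - x')) : ℝ) : EReal))) ⟨y', hy'⟩
      simpa [EReal.coe_sub, g] using this
    exact_mod_cast hle
  have hsum : S x + g (y - x) = χ y := by simp only [g]; linarith
  -- interior openness
  have hopen : IsOpen {z : EuclideanSpace ℝ (Fin D) | ∀ i, 0 < z i} := by
    have : {z : EuclideanSpace ℝ (Fin D) | ∀ i, 0 < z i} = ⋂ i, {z : EuclideanSpace ℝ (Fin D) | 0 < z i} := by ext z; simp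
    rw [this]
    exact isOpen_iInter_of_finite fun i =>
      isOpen_lt continuous_const (EuclideanSpace.proj i).continuous
  have part1 : (∀ i, 0 < x i) → DifferentiableAt ℝ S x →
      gradient S x = gradient g (y - x) := by
    intro hxpos hSdiff
    have hmin : IsLocalMin (fun x' => S x' + g (y - x')) x := by
      have hev : ∀ᶠ x' in nhds x, (∀ i, 0 < x' i) := hopen.eventually_mem hxpos
      filter_upwards [hev] with x' hx'
      have hx'o : x' ∈ orthant D := fun i => (hx' i).le
      have := key y hy x' hx'o
      have : χ y ≤ S x' + g (y - x') := by linarith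
      linarith [hsum]
    have hdiff2 : DifferentiableAt ℝ (fun x' : EuclideanSpace ℝ (Fin D) => g (y - x')) x :=
      (hgdiff (y - x)).comp x ((differentiableAt_const y).sub differentiableAt_id)
    have hfd : fderiv ℝ (fun x' => S x' + g (y - x')) x = 0 := hmin.fderiv_eq_zero
    have hfd2 : fderiv ℝ (fun x' : EuclideanSpace ℝ (Fin D) => g (y - x')) x = -(fderiv ℝ g (y - x)) := by
      have h1 : HasFDerivAt (fun x' : EuclideanSpace ℝ (Fin D) => y - x')
          ((0 : EuclideanSpace ℝ (Fin D) →L[ℝ] EuclideanSpace ℝ (Fin D)) - ContinuousLinearMap.id ℝ (EuclideanSpace ℝ (Fin D))) x :=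
        (hasFDerivAt_const y x).sub (hasFDerivAt_id x)
      have h2 : HasFDerivAt (fun x' : EuclideanSpace ℝ (Fin D) => g (y - x'))
          ((fderiv ℝ g (y - x)).comp ((0 : EuclideanSpace ℝ (Fin D) →L[ℝ] EuclideanSpace ℝ (Fin D)) - ContinuousLinearMap.id ℝ (EuclideanSpace ℝ (Fin D)))) x :=
        (hgdiff (y - x)).hasFDerivAt.comp x h1
      rw [h2.fderiv]
      ext v
      simp
    rw [fderiv_fun_add hSdiff hdiff2, hfd2] at hfd
    have hS' : fderiv ℝ S x = fderiv ℝ g (y - x) := by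
      have := hfd
      rw [add_neg_eq_zero] at this
      exact this
    unfold gradient
    rw [hS']
  have part2 : (∀ i, 0 < y i) → DifferentiableAt ℝ χ y →
      gradient χ y = gradient g (y - x) := by
    intro hypos hχdiff
    have hmax : IsLocalMax (fun y' => χ y' - g (y' - x)) y := by
      have hev : ∀ᶠ y' in nhds y, (∀ i, 0 < y' i) := hopen.eventually_mem hypos
      filter_upwards [hev] with y' hy'
      have hy'o : y' ∈ orthant D := fun i => (hy' i).le
      have := key y' hy'o x hx
      linarith [hsum]
    have hdiff2 : DifferentiableAt ℝ (fun y' : EuclideanSpace ℝ (Fin D) => g (y' - x)) y :=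
      by have h := (hgdiff (y - x)).comp y (differentiableAt_id.sub (differentiableAt_const x)); exact h
    have hfd : fderiv ℝ (fun y' => χ y' - g (y' - x)) y = 0 := hmax.fderiv_eq_zero
    have hfd2 : fderiv ℝ (fun y' : EuclideanSpace ℝ (Fin D) => g (y' - x)) y = fderiv ℝ g (y - x) := by
      have h1 : HasFDerivAt (fun y' : EuclideanSpace ℝ (Fin D) => y' - x)
          (ContinuousLinearMap.id ℝ (EuclideanSpace ℝ (Fin D)) - (0 : EuclideanSpace ℝ (Fin D) →L[ℝ] EuclideanSpace ℝ (Fin D))) y :=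
        (hasFDerivAt_id y).sub (hasFDerivAt_const x y)
      have h2 : HasFDerivAt (fun y' : EuclideanSpace ℝ (Fin D) => g (y' - x))
          ((fderiv ℝ g (y - x)).comp (ContinuousLinearMap.id ℝ (EuclideanSpace ℝ (Fin D)) - (0 : EuclideanSpace ℝ (Fin D) →L[ℝ] EuclideanSpace ℝ (Fin D)))) y :=
        by have h := (hgdiff (y - x)).hasFDerivAt.comp y h1; exact h
      rw [h2.fderiv]
      ext v
      simp
    rw [fderiv_fun_sub hχdiff hdiff2, hfd2, sub_eq_zero] at hfd
    unfold gradient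
    rw [hfd]
  exact ⟨part1, part2, fun h1 h2 h3 h4 => (part1 h1 h2).trans (part2 h3 h4).symm⟩
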